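/- arXiv:2502.10371 — 4 statements merged into one kernel-verified Lean document; each statement's English description precedes it below -/
import Mathlib

section
/- Let S : [0,T] → ℂ^(M×N) be a continuous matrix-valued function with pointwise singular value decomposition S(t) = U_t Σ_t V_tᴴ, and define G_rx = ∫₀ᵀ U_t Σ_t U_tᴴ dt and G_tx = ∫₀ᵀ V_t Σ_t V_tᴴ dt. Then for all vectors c ∈ ℂ^M and w ∈ ℂ^N, we have ∫₀ᵀ |cᴴ S(t) w| dt ≤ √(cᴴ G_rx c) · √(wᴴ G_tx w). -/
open Matrix MeasureTheory

lemma quad_eq {m n r : ℕ} (X : Matrix (Fin m) (Fin r) ℂ) (Y : Matrix (Fin n) (Fin r) ℂ)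
    (d : Fin r → ℂ) (x : Fin m → ℂ) (y : Fin n → ℂ) :
    star x ⬝ᵥ (X * Matrix.diagonal d * Yᴴ).mulVec y =
      ∑ p, d p * (star (Xᴴ.mulVec x)) p * (Yᴴ.mulVec y) p := by
  rw [← Matrix.mulVec_mulVec, ← Matrix.mulVec_mulVec, Matrix.dotProduct_mulVec]
  have hx : star x ᵥ* X = star (Xᴴ.mulVec x) := by
    rw [Matrix.star_mulVec, Matrix.conjTranspose_conjTranspose]
  rw [hx, dotProduct]
  refine Finset.sum_congr rfl fun p _ => ?_
  rw [Matrix.mulVec_diagonal]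
  ring

lemma quad_self {m r : ℕ} (X : Matrix (Fin m) (Fin r) ℂ) (d : Fin r → ℝ) (x : Fin m → ℂ) :
    star x ⬝ᵥ (X * Matrix.diagonal (fun p => (d p : ℂ)) * Xᴴ).mulVec x
      = ((∑ p, d p * Complex.normSq (Xᴴ.mulVec x p) : ℝ) : ℂ) := by
  rw [quad_eq]
  push_cast
  refine Finset.sum_congr rfl fun p _ => ?_
  rw [Pi.star_apply, mul_assoc, Complex.star_def, ← Complex.normSq_eq_conj_mul_self]

lemma integral_quad {m : ℕ} {T : ℝ} (Mt : ℝ → Matrix (Fin m) (Fin m) ℂ)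
    (hMt : Continuous Mt) (Gm : Matrix (Fin m) (Fin m) ℂ)
    (hGm : ∀ i j, Gm i j = ∫ t in (0:ℝ)..T, Mt t i j) (x : Fin m → ℂ) :
    star x ⬝ᵥ Gm.mulVec x = ∫ t in (0:ℝ)..T, star x ⬝ᵥ (Mt t).mulVec x := by
  have hc : ∀ i j : Fin m, Continuous fun t => Mt t i j := fun i j =>
    ((continuous_apply j).comp ((continuous_apply i).comp hMt))
  simp only [dotProduct, Matrix.mulVec, hGm]
  rw [intervalIntegral.integral_finset_sum (f := fun i t => star x i * ∑ j, Mt t i j * x j) (fun i _ =>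
    (continuous_const.mul (continuous_finset_sum _ fun j _ =>
      (hc i j).mul continuous_const)).intervalIntegrable 0 T)]
  refine Finset.sum_congr rfl fun i _ => ?_
  rw [intervalIntegral.integral_const_mul]
  congr 1
  rw [intervalIntegral.integral_finset_sum (f := fun j t => Mt t i j * x j) (fun j _ =>
    ((hc i j).mul continuous_const).intervalIntegrable 0 T)]
  refine Finset.sum_congr rfl fun j _ => ?_
  rw [intervalIntegral.integral_mul_const]

/-- Integral split bound: the beamformed self-interference integral is bounded by
the TX/RX quadratic forms of the integral-split matrices. -/
theorem integral_split_bound (M N r : ℕ) (hM : 0 < M) (hN : 0 < N) (T : ℝ) (hT : 0 < T)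
    (S : ℝ → Matrix (Fin M) (Fin N) ℂ)
    (U : ℝ → Matrix (Fin M) (Fin r) ℂ)
    (V : ℝ → Matrix (Fin N) (Fin r) ℂ)
    (σ : ℝ → Fin r → ℝ)
    (hScont : Continuous S)
    (hUcont : Continuous U)
    (hVcont : Continuous V)
    (hσcont : Continuous σ)
    (hσ : ∀ t p, 0 ≤ σ t p)
    (hU : ∀ t, (U t)ᴴ * U t = 1)
    (hV : ∀ t, (V t)ᴴ * V t = 1)
    (hSVD : ∀ t, S t = U t * Matrix.diagonal (fun p => (σ t p : ℂ)) * (V t)ᴴ)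
    (Grx : Matrix (Fin M) (Fin M) ℂ)
    (Gtx : Matrix (Fin N) (Fin N) ℂ)
    (hGrx : ∀ i j, Grx i j =
      ∫ t in (0:ℝ)..T, (U t * Matrix.diagonal (fun p => (σ t p : ℂ)) * (U t)ᴴ) i j)
    (hGtx : ∀ i j, Gtx i j =
      ∫ t in (0:ℝ)..T, (V t * Matrix.diagonal (fun p => (σ t p : ℂ)) * (V t)ᴴ) i j)
    (c : Fin M → ℂ) (w : Fin N → ℂ) :
    (∫ t in (0:ℝ)..T, ‖star c ⬝ᵥ (S t).mulVec w‖) ≤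
      Real.sqrt ((star c ⬝ᵥ Grx.mulVec c).re) *
        Real.sqrt ((star w ⬝ᵥ Gtx.mulVec w).re) := by
  have hT' : (0:ℝ) ≤ T := hT.le
  set F : ℝ → ℝ := fun t => ∑ p, σ t p * Complex.normSq ((U t)ᴴ.mulVec c p) with hFdef
  set G : ℝ → ℝ := fun t => ∑ p, σ t p * Complex.normSq ((V t)ᴴ.mulVec w p) with hGdef
  -- continuity facts
  have hDcont : Continuous fun t => Matrix.diagonal (fun p => (σ t p : ℂ)) :=
    Continuous.matrix_diagonal
      (continuous_pi fun p => Complex.continuous_ofReal.comp ((continuous_apply p).comp hσcont))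
  have hacont : Continuous fun t => (U t)ᴴ.mulVec c :=
    hUcont.matrix_conjTranspose.matrix_mulVec continuous_const
  have hbcont : Continuous fun t => (V t)ᴴ.mulVec w :=
    hVcont.matrix_conjTranspose.matrix_mulVec continuous_const
  have hFcont : Continuous F := continuous_finset_sum _ fun p _ =>
    ((continuous_apply p).comp hσcont).mul
      (Complex.continuous_normSq.comp ((continuous_apply p).comp hacont))
  have hGcont : Continuous G := continuous_finset_sum _ fun p _ =>
    ((continuous_apply p).comp hσcont).mul
      (Complex.continuous_normSq.comp ((continuous_apply p).comp hbcont))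
  have hFnn : ∀ t, 0 ≤ F t := fun t =>
    Finset.sum_nonneg fun p _ => mul_nonneg (hσ t p) (Complex.normSq_nonneg _)
  have hGnn : ∀ t, 0 ≤ G t := fun t =>
    Finset.sum_nonneg fun p _ => mul_nonneg (hσ t p) (Complex.normSq_nonneg _)
  -- the pointwise quadratic forms
  have hφU : ∀ t, star c ⬝ᵥ (U t * Matrix.diagonal (fun p => (σ t p : ℂ)) * (U t)ᴴ).mulVec c
      = ((F t : ℝ) : ℂ) := fun t => quad_self (U t) (σ t) c
  have hφV : ∀ t, star w ⬝ᵥ (V t * Matrix.diagonal (fun p => (σ t p : ℂ)) * (V t)ᴴ).mulVec w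
      = ((G t : ℝ) : ℂ) := fun t => quad_self (V t) (σ t) w
  -- the quadratic forms of the integral matrices
  have hGrxre : (star c ⬝ᵥ Grx.mulVec c).re = ∫ t in (0:ℝ)..T, F t := by
    rw [integral_quad _ ((hUcont.matrix_mul hDcont).matrix_mul hUcont.matrix_conjTranspose)
      Grx hGrx c, intervalIntegral.integral_congr (g := fun t => ((F t : ℝ) : ℂ))
        (fun t _ => hφU t), intervalIntegral.integral_ofReal, Complex.ofReal_re]
  have hGtxre : (star w ⬝ᵥ Gtx.mulVec w).re = ∫ t in (0:ℝ)..T, G t := by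
    rw [integral_quad _ ((hVcont.matrix_mul hDcont).matrix_mul hVcont.matrix_conjTranspose)
      Gtx hGtx w, intervalIntegral.integral_congr (g := fun t => ((G t : ℝ) : ℂ))
        (fun t _ => hφV t), intervalIntegral.integral_ofReal, Complex.ofReal_re]
  -- pointwise Cauchy–Schwarz
  have hpt : ∀ t, ‖star c ⬝ᵥ (S t).mulVec w‖ ≤ Real.sqrt (F t) * Real.sqrt (G t) := by
    intro t
    rw [hSVD t, quad_eq]
    calc ‖∑ p, (σ t p : ℂ) * (star ((U t)ᴴ.mulVec c)) p * ((V t)ᴴ.mulVec w) p‖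
        ≤ ∑ p, ‖(σ t p : ℂ) * (star ((U t)ᴴ.mulVec c)) p * ((V t)ᴴ.mulVec w) p‖ :=
          norm_sum_le _ _
      _ = ∑ p, Real.sqrt (σ t p * Complex.normSq ((U t)ᴴ.mulVec c p)) *
            Real.sqrt (σ t p * Complex.normSq ((V t)ᴴ.mulVec w p)) := by
          refine Finset.sum_congr rfl fun p _ => ?_
          have h1 : ‖(σ t p : ℂ) * (star ((U t)ᴴ.mulVec c)) p * ((V t)ᴴ.mulVec w) p‖
              = σ t p * (‖(U t)ᴴ.mulVec c p‖ * ‖(V t)ᴴ.mulVec w p‖) := by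
            rw [norm_mul, norm_mul, Complex.norm_real, Real.norm_of_nonneg (hσ t p),
              Pi.star_apply, Complex.star_def, Complex.norm_conj, mul_assoc]
          have h2 : Real.sqrt (σ t p * Complex.normSq ((U t)ᴴ.mulVec c p)) *
                Real.sqrt (σ t p * Complex.normSq ((V t)ᴴ.mulVec w p))
              = σ t p * (‖(U t)ᴴ.mulVec c p‖ * ‖(V t)ᴴ.mulVec w p‖) := by
            rw [Real.sqrt_mul (hσ t p), Real.sqrt_mul (hσ t p), ← Complex.norm_def,
              ← Complex.norm_def, mul_mul_mul_comm, Real.mul_self_sqrt (hσ t p)]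
          rw [h1, h2]
      _ ≤ Real.sqrt (F t) * Real.sqrt (G t) :=
          Real.sum_sqrt_mul_sqrt_le _
            (fun p => mul_nonneg (hσ t p) (Complex.normSq_nonneg _))
            (fun p => mul_nonneg (hσ t p) (Complex.normSq_nonneg _))
  -- monotone integral step
  have habscont : Continuous fun t => ‖star c ⬝ᵥ (S t).mulVec w‖ :=
    continuous_norm.comp
      (continuous_const.dotProduct (hScont.matrix_mulVec continuous_const))
  have hmono : (∫ t in (0:ℝ)..T, ‖star c ⬝ᵥ (S t).mulVec w‖) ≤
      ∫ t in (0:ℝ)..T, Real.sqrt (F t) * Real.sqrt (G t) :=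
    intervalIntegral.integral_mono_on hT' (habscont.intervalIntegrable 0 T)
      ((hFcont.sqrt.mul hGcont.sqrt).intervalIntegrable 0 T) (fun t _ => hpt t)
  -- Cauchy–Schwarz (Hölder with p = q = 2) for the integral
  have hHolder : (∫ t in (0:ℝ)..T, Real.sqrt (F t) * Real.sqrt (G t)) ≤
      Real.sqrt (∫ t in (0:ℝ)..T, F t) * Real.sqrt (∫ t in (0:ℝ)..T, G t) := by
    rw [intervalIntegral.integral_of_le hT', intervalIntegral.integral_of_le hT',
      intervalIntegral.integral_of_le hT']
    set μ := volume.restrict (Set.Ioc (0:ℝ) T) with hμ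
    haveI : IsFiniteMeasure μ := by
      constructor
      rw [hμ, Measure.restrict_apply_univ, Real.volume_Ioc]
      exact ENNReal.ofReal_lt_top
    have hmem : ∀ (f : ℝ → ℝ), Continuous f → MemLp f (ENNReal.ofReal 2) μ := by
      intro f hf
      obtain ⟨C, hC⟩ := (isCompact_Icc (a := (0:ℝ)) (b := T)).exists_bound_of_continuousOn
        hf.continuousOn
      refine MemLp.of_bound hf.aestronglyMeasurable C ?_
      filter_upwards [ae_restrict_mem measurableSet_Ioc] with t ht
      exact hC t (Set.mem_Icc_of_Ioc ht)
    have h2 : (2:ℝ).HolderConjugate 2 := Real.HolderConjugate.two_two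
    have key := integral_mul_le_Lp_mul_Lq_of_nonneg h2
      (f := fun t => Real.sqrt (F t)) (g := fun t => Real.sqrt (G t)) (μ := μ)
      (Filter.Eventually.of_forall fun t => Real.sqrt_nonneg _)
      (Filter.Eventually.of_forall fun t => Real.sqrt_nonneg _)
      (hmem _ hFcont.sqrt) (hmem _ hGcont.sqrt)
    calc (∫ t, Real.sqrt (F t) * Real.sqrt (G t) ∂μ)
        ≤ (∫ t, Real.sqrt (F t) ^ (2:ℝ) ∂μ) ^ ((1:ℝ)/2) *
          (∫ t, Real.sqrt (G t) ^ (2:ℝ) ∂μ) ^ ((1:ℝ)/2) := key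
      _ = Real.sqrt (∫ t, F t ∂μ) * Real.sqrt (∫ t, G t ∂μ) := by
          rw [← Real.sqrt_eq_rpow, ← Real.sqrt_eq_rpow]
          congr 1
          · congr 1
            refine integral_congr_ae (Filter.Eventually.of_forall fun t => ?_)
            show Real.sqrt (F t) ^ (2:ℝ) = F t
            rw [Real.rpow_two, Real.sq_sqrt (hFnn t)]
          · congr 1
            refine integral_congr_ae (Filter.Eventually.of_forall fun t => ?_)
            show Real.sqrt (G t) ^ (2:ℝ) = G t
            rw [Real.rpow_two, Real.sq_sqrt (hGnn t)]
  calc (∫ t in (0:ℝ)..T, ‖star c ⬝ᵥ (S t).mulVec w‖)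
      ≤ ∫ t in (0:ℝ)..T, Real.sqrt (F t) * Real.sqrt (G t) := hmono
    _ ≤ Real.sqrt (∫ t in (0:ℝ)..T, F t) * Real.sqrt (∫ t in (0:ℝ)..T, G t) := hHolder
    _ = Real.sqrt ((star c ⬝ᵥ Grx.mulVec c).re) * Real.sqrt ((star w ⬝ᵥ Gtx.mulVec w).re) := by
        rw [hGrxre, hGtxre]
end

section
/- Let G ∈ ℂ^(P×P) be positive semidefinite Hermitian with spectral decomposition G = Q Γ Qᴴ (Q unitary, Γ diagonal with entries σ_p ≥ 0), let r ∈ ℂ^P with ‖r‖₂ = 1, and let ν > 0. Define ž = Q (Γ + ν I)⁻¹ Qᴴ r and z = ž / ‖ž‖₂. If ν satisfies Σ_p (σ_p − ε)|q_pᴴ r|² / (σ_p + ν)² = 0, then z satisfies zᴴ G z = ε. -/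
open Matrix ComplexOrder

/-- KKT complementary slackness: if ν > 0 satisfies
Σ_p (σ_p − ε)|q_pᴴ r|²/(σ_p + ν)² = 0, then the normalized vector
z = Q (Γ + νI)⁻¹ Qᴴ r / ‖·‖ meets the SI constraint with equality: zᴴ G z = ε. -/
theorem kkt_normalized_meets_constraint (P : ℕ)
    (G : Matrix (Fin P) (Fin P) ℂ) (hG : G.PosSemidef)
    (Q : Matrix (Fin P) (Fin P) ℂ)
    (hQ : Qᴴ * Q = 1) (hQ' : Q * Qᴴ = 1)
    (σ : Fin P → ℝ) (hσ : ∀ p, 0 ≤ σ p)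
    (hdec : G = Q * Matrix.diagonal (fun p => (σ p : ℂ)) * Qᴴ)
    (r : Fin P → ℂ) (hr : star r ⬝ᵥ r = 1)
    (ν : ℝ) (hν : 0 < ν) (ε : ℝ)
    (zc : Fin P → ℂ)
    (hzc : zc = (Q * (Matrix.diagonal (fun p => (σ p : ℂ)) + (ν : ℂ) • (1 : Matrix (Fin P) (Fin P) ℂ))⁻¹ * Qᴴ).mulVec r)
    (z : Fin P → ℂ)
    (hz : z = (Real.sqrt ((star zc ⬝ᵥ zc).re))⁻¹ • zc)
    (hroot : ∑ p, (σ p - ε) * ‖(Qᴴ.mulVec r) p‖ ^ 2 / (σ p + ν) ^ 2 = 0) :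
    (star z ⬝ᵥ G.mulVec z).re = ε := by
  classical
  set w : Fin P → ℂ := Qᴴ.mulVec r with hw
  have hdpos : ∀ p, (0:ℝ) < σ p + ν := fun p => by have := hσ p; linarith
  have hdne : ∀ p, ((σ p + ν : ℝ) : ℂ) ≠ 0 := fun p => by
    exact_mod_cast (hdpos p).ne'
  have hD : Matrix.diagonal (fun p => (σ p : ℂ)) + (ν : ℂ) • (1 : Matrix (Fin P) (Fin P) ℂ)
      = Matrix.diagonal (fun p => ((σ p + ν : ℝ) : ℂ)) := by
    ext i j
    by_cases h : i = j
    · subst h; simp [Matrix.diagonal_apply, Matrix.one_apply]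
    · simp [Matrix.diagonal_apply, Matrix.one_apply, h]
  have hDinv : (Matrix.diagonal (fun p => ((σ p + ν : ℝ) : ℂ)))⁻¹
      = Matrix.diagonal (fun p => ((σ p + ν : ℝ) : ℂ)⁻¹) := by
    apply Matrix.inv_eq_right_inv
    rw [Matrix.diagonal_mul_diagonal]
    ext i j
    by_cases h : i = j
    · subst h
      have hne := hdne i
      push_cast at hne
      simp [Matrix.diagonal_apply, Matrix.one_apply, mul_inv_cancel₀ hne]
    · simp [Matrix.diagonal_apply, Matrix.one_apply, h]
  set u : Fin P → ℂ := fun p => ((σ p + ν : ℝ) : ℂ)⁻¹ * w p with hu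
  have h1 : (Matrix.diagonal fun p => ((σ p + ν : ℝ) : ℂ)⁻¹) *ᵥ w = u := by
    ext p; rw [Matrix.mulVec_diagonal]
  have hzc' : zc = Q.mulVec u := by
    rw [hzc, hD, hDinv, ← Matrix.mulVec_mulVec, ← Matrix.mulVec_mulVec, ← hw, h1]
  have key : ∀ a b : Fin P → ℂ, star (Q.mulVec a) ⬝ᵥ (Q.mulVec b) = star a ⬝ᵥ b := by
    intro a b
    rw [Matrix.star_mulVec, ← Matrix.dotProduct_mulVec, Matrix.mulVec_mulVec, hQ,
      Matrix.one_mulVec]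
  have hGzc : G.mulVec zc = Q.mulVec ((Matrix.diagonal (fun p => (σ p : ℂ))).mulVec u) := by
    rw [hzc', Matrix.mulVec_mulVec, Matrix.mulVec_mulVec, hdec, Matrix.mul_assoc, hQ,
      Matrix.mul_one]
  set c : Fin P → ℝ := fun p => ‖w p‖ ^ 2 / (σ p + ν) ^ 2 with hc
  have hcnn : ∀ p, 0 ≤ c p := fun p => by positivity
  have habs : ∀ p, star (u p) * u p = ((c p : ℝ) : ℂ) := by
    intro p
    have h3 : ‖u p‖ ^ 2 = c p := by
      have h2 : ‖u p‖ = (σ p + ν)⁻¹ * ‖w p‖ := by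
        show ‖((σ p + ν : ℝ) : ℂ)⁻¹ * w p‖ = _
        rw [norm_mul, norm_inv, Complex.norm_real, Real.norm_eq_abs, abs_of_pos (hdpos p)]
      rw [h2]
      simp only [hc]
      rw [mul_pow, inv_pow]
      ring
    rw [Complex.star_def, ← Complex.normSq_eq_conj_mul_self, ← Complex.sq_norm, h3]
  set N : ℝ := ∑ p, c p with hN
  set S : ℝ := ∑ p, σ p * c p with hS
  have hzz : star zc ⬝ᵥ zc = ((N : ℝ) : ℂ) := by
    rw [hzc', key, dotProduct, hN]
    push_cast
    exact Finset.sum_congr rfl fun p _ => habs p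
  have hzGz : star zc ⬝ᵥ G.mulVec zc = ((S : ℝ) : ℂ) := by
    rw [hGzc, hzc', key, dotProduct, hS]
    push_cast
    refine Finset.sum_congr rfl fun p _ => ?_
    rw [Matrix.mulVec_diagonal]
    rw [show star u p * ((σ p : ℂ) * u p) = (σ p : ℂ) * (star (u p) * u p) by
      simp [mul_comm, mul_assoc, mul_left_comm], habs p]
  -- N > 0
  have hww : star w ⬝ᵥ w = 1 := by
    have : star (Qᴴ.mulVec r) ⬝ᵥ (Qᴴ.mulVec r) = star r ⬝ᵥ r := by
      rw [Matrix.star_mulVec, ← Matrix.dotProduct_mulVec, Matrix.mulVec_mulVec,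
        Matrix.conjTranspose_conjTranspose, hQ', Matrix.one_mulVec]
    rw [hw, this, hr]
  have hNpos : 0 < N := by
    rcases lt_or_ge 0 N with h | hcon
    · exact h
    · exfalso
      have hN0 : ∑ p, c p = 0 :=
        le_antisymm (hN ▸ hcon) (Finset.sum_nonneg fun p _ => hcnn p)
      have hw0 : ∀ p, w p = 0 := by
        intro p
        have h0 : c p = 0 :=
          (Finset.sum_eq_zero_iff_of_nonneg (fun q _ => hcnn q)).mp hN0 p (Finset.mem_univ p)
        simp only [hc] at h0
        have hne : (σ p + ν) ^ 2 ≠ 0 := pow_ne_zero 2 (hdpos p).ne'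
        rw [div_eq_zero_iff] at h0
        have habs0 : ‖w p‖ ^ 2 = 0 := h0.resolve_right hne
        have : ‖w p‖ = 0 := by
          exact (pow_eq_zero_iff two_ne_zero).mp habs0
        exact norm_eq_zero.mp this
      have h0 : star w ⬝ᵥ w = 0 := by
        simp [dotProduct, hw0]
      rw [hww] at h0
      exact one_ne_zero h0
  -- hroot gives S = ε * N
  have hSN : S = ε * N := by
    have : ∑ p, (σ p - ε) * c p = 0 := by
      rw [← hroot]
      refine Finset.sum_congr rfl fun p _ => ?_
      simp only [hc]
      ring
    have expand : ∑ p, (σ p - ε) * c p = S - ε * N := by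
      rw [hS, hN, Finset.mul_sum, ← Finset.sum_sub_distrib]
      exact Finset.sum_congr rfl fun p _ => by ring
    rw [expand] at this
    linarith
  -- final computation
  have hre : (star zc ⬝ᵥ zc).re = N := by rw [hzz, Complex.ofReal_re]
  rw [hz, hre, star_smul, Matrix.mulVec_smul, smul_dotProduct, dotProduct_smul,
    hzGz]
  have ha : star ((Real.sqrt N)⁻¹ : ℝ) = ((Real.sqrt N)⁻¹ : ℝ) := rfl
  rw [ha]
  have : ((Real.sqrt N)⁻¹ • (Real.sqrt N)⁻¹ • ((S : ℝ) : ℂ)) = (((N⁻¹ * S : ℝ)) : ℂ) := by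
    rw [Complex.real_smul, Complex.real_smul, ← mul_assoc, ← Complex.ofReal_mul,
      ← Complex.ofReal_mul, ← mul_inv, Real.mul_self_sqrt hNpos.le]
  rw [this, Complex.ofReal_re, hSN]
  field_simp
end

section
/- Let G ∈ ℂ^(P×P) be Hermitian positive definite with spectral decomposition G = Q Γ Qᴴ and positive eigenvalues σ_1,…,σ_P, and r ∈ ℂ^P with ‖r‖₂ = 1. Define σ̄(r,G) = (Σ_p |q_pᴴ r|²/σ_p) / (Σ_p |q_pᴴ r|²/σ_p²). If σ̄(r,G) < ε < rᴴ G r, then the polynomial P(ν) = Σ_p (σ_p − ε)|q_pᴴ r|² Π_{q≠p}(σ_q + ν)² has a positive real root. -/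
open Matrix ComplexOrder Filter

/-- If G is positive definite (all eigenvalues σ_p > 0) and
σ̄(r,G) < ε < rᴴ G r, then the KKT polynomial
P(ν) = Σ_p (σ_p − ε)|q_pᴴ r|² Π_{q≠p}(σ_q + ν)² has a positive real root. -/
theorem kkt_polynomial_root_posdef (P : ℕ)
    (G : Matrix (Fin P) (Fin P) ℂ)
    (Q : Matrix (Fin P) (Fin P) ℂ)
    (hQ : Qᴴ * Q = 1) (hQ' : Q * Qᴴ = 1)
    (σ : Fin P → ℝ) (hσ : ∀ p, 0 < σ p)
    (hdec : G = Q * Matrix.diagonal (fun p => (σ p : ℂ)) * Qᴴ)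
    (r : Fin P → ℂ) (hr : star r ⬝ᵥ r = 1)
    (ε : ℝ)
    (hεlo : (∑ p, ‖(Qᴴ.mulVec r) p‖ ^ 2 / σ p) /
            (∑ p, ‖(Qᴴ.mulVec r) p‖ ^ 2 / (σ p) ^ 2) < ε)
    (hεhi : ε < (star r ⬝ᵥ G.mulVec r).re) :
    ∃ ν : ℝ, 0 < ν ∧
      ∑ p, (σ p - ε) * ‖(Qᴴ.mulVec r) p‖ ^ 2 *
        ∏ q ∈ Finset.univ.erase p, (σ q + ν) ^ 2 = 0 := by
  set u : Fin P → ℂ := Qᴴ.mulVec r with hu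
  set c : Fin P → ℝ := fun p => ‖u p‖ ^ 2 with hc
  have hcnn : ∀ p, 0 ≤ c p := fun p => by positivity
  have habs : ∀ z : ℂ, star z * z = ((‖z‖ ^ 2 : ℝ) : ℂ) := fun z => by
    rw [Complex.sq_norm, Complex.normSq_eq_conj_mul_self, Complex.star_def]
  -- transport dot products
  have key : ∀ D : Matrix (Fin P) (Fin P) ℂ,
      star u ⬝ᵥ D.mulVec u = star r ⬝ᵥ (Q * D * Qᴴ).mulVec r := by
    intro D
    rw [hu, Matrix.star_mulVec, ← Matrix.dotProduct_mulVec, Matrix.conjTranspose_conjTranspose,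
      Matrix.mulVec_mulVec, Matrix.mulVec_mulVec, Matrix.mul_assoc]
  have hsum1 : ∑ p, c p = 1 := by
    have h1 : star u ⬝ᵥ (1 : Matrix (Fin P) (Fin P) ℂ).mulVec u = star r ⬝ᵥ r := by
      rw [key, Matrix.mul_one, hQ', Matrix.one_mulVec]
    rw [Matrix.one_mulVec, hr] at h1
    have h2 : (∑ p, (c p : ℂ)) = 1 := by
      rw [← h1]
      simp only [dotProduct, Pi.star_apply]
      exact Finset.sum_congr rfl fun p _ => (habs (u p)).symm
    exact_mod_cast h2
  have hsumG : ∑ p, σ p * c p = (star r ⬝ᵥ G.mulVec r).re := by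
    have h1 := key (Matrix.diagonal (fun p => (σ p : ℂ)))
    rw [← hdec] at h1
    have h2 : star u ⬝ᵥ (Matrix.diagonal (fun p => (σ p : ℂ))).mulVec u
        = Complex.ofReal (∑ p, σ p * c p) := by
      simp only [dotProduct, Pi.star_apply, Matrix.mulVec_diagonal]
      rw [Complex.ofReal_sum]
      refine Finset.sum_congr rfl fun p _ => ?_
      rw [Complex.ofReal_mul, ← habs]
      ring
    rw [h2] at h1
    rw [← h1, Complex.ofReal_re]
  -- leading coefficient S
  set S : ℝ := ∑ p, (σ p - ε) * c p with hS
  have hSpos : 0 < S := by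
    have : S = (∑ p, σ p * c p) - ε * ∑ p, c p := by
      rw [hS, Finset.mul_sum, ← Finset.sum_sub_distrib]
      exact Finset.sum_congr rfl fun p _ => by ring
    rw [this, hsum1, hsumG, mul_one]
    linarith
  -- B > 0
  have hB : 0 < ∑ p, c p / (σ p) ^ 2 := by
    have hex : ∃ p ∈ Finset.univ, 0 < c p / (σ p) ^ 2 := by
      by_contra h
      push_neg at h
      have : ∑ p, c p ≤ 0 := Finset.sum_nonpos fun p _ => by
        have h1 := h p (Finset.mem_univ p)
        have h2 : 0 < (σ p) ^ 2 := pow_pos (hσ p) 2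
        by_contra hcp
        push_neg at hcp
        exact absurd (div_pos hcp h2) (not_lt.mpr h1)
      rw [hsum1] at this; linarith
    exact Finset.sum_pos' (fun p _ => div_nonneg (hcnn p) (pow_pos (hσ p) 2).le) hex
  -- f 0 < 0
  set f : ℝ → ℝ := fun ν => ∑ p, (σ p - ε) * c p * ∏ q ∈ Finset.univ.erase p, (σ q + ν) ^ 2
    with hf
  have hf0 : f 0 < 0 := by
    have hAB : (∑ p, c p / σ p) - ε * ∑ p, c p / (σ p) ^ 2 < 0 := by
      have := (div_lt_iff₀ hB).mp hεlo
      linarith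
    have hterm : ∀ p : Fin P, (σ p - ε) * c p * ∏ q ∈ Finset.univ.erase p, (σ q + 0) ^ 2
        = (∏ q, (σ q) ^ 2) * ((σ p - ε) * c p / (σ p) ^ 2) := by
      intro p
      have h1 : (∏ q ∈ Finset.univ.erase p, (σ q) ^ 2) * (σ p) ^ 2 = ∏ q, (σ q) ^ 2 :=
        Finset.prod_erase_mul _ _ (Finset.mem_univ p)
      have h2 : (σ p) ^ 2 ≠ 0 := (pow_pos (hσ p) 2).ne' 
      have h3 : (σ p) ^ 2 * ((σ p) ^ 2)⁻¹ = 1 := mul_inv_cancel₀ h2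
      simp only [add_zero]
      rw [← h1, div_eq_mul_inv]
      linear_combination (-(σ p - ε) * c p * ∏ q ∈ Finset.univ.erase p, (σ q) ^ 2) * h3
    have hsum : f 0 = (∏ q, (σ q) ^ 2) * ∑ p, (σ p - ε) * c p / (σ p) ^ 2 := by
      simp only [hf]
      simp only [hterm]
      rw [Finset.mul_sum]
    have hneg : ∑ p, (σ p - ε) * c p / (σ p) ^ 2 < 0 := by
      have heq : ∑ p, (σ p - ε) * c p / (σ p) ^ 2
          = (∑ p, c p / σ p) - ε * ∑ p, c p / (σ p) ^ 2 := by
        rw [Finset.mul_sum, ← Finset.sum_sub_distrib]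
        refine Finset.sum_congr rfl fun p _ => ?_
        have h2 : σ p ≠ 0 := (hσ p).ne'
        field_simp
      rw [heq]; exact hAB
    have hprod : 0 < ∏ q, (σ q) ^ 2 := Finset.prod_pos fun q _ => pow_pos (hσ q) 2
    rw [hsum]
    exact mul_neg_of_pos_of_neg hprod hneg
  -- tendsto: g ν = f ν / (ν^2)^(P-1) → S
  have hg : Tendsto (fun ν : ℝ => ∑ p, (σ p - ε) * c p *
      ∏ q ∈ Finset.univ.erase p, ((σ q + ν) / ν) ^ 2) atTop (nhds S) := by
    rw [hS]
    refine tendsto_finset_sum _ fun p _ => ?_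
    have h1 : Tendsto (fun ν : ℝ => ∏ q ∈ Finset.univ.erase p, ((σ q + ν) / ν) ^ 2)
        atTop (nhds 1) := by
      have : (1 : ℝ) = ∏ q ∈ Finset.univ.erase p, (1 : ℝ) ^ 2 := by simp
      rw [this]
      refine tendsto_finset_prod _ fun q _ => ?_
      have h2 : Tendsto (fun ν : ℝ => (σ q + ν) / ν) atTop (nhds 1) := by
        have h3 : Tendsto (fun ν : ℝ => σ q * ν⁻¹ + 1) atTop (nhds 1) := by
          have h4 : Tendsto (fun ν : ℝ => σ q * ν⁻¹ + 1) atTop (nhds (σ q * 0 + 1)) :=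
            (tendsto_inv_atTop_zero.const_mul (σ q)).add tendsto_const_nhds
          simpa using h4
        refine h3.congr' ?_
        filter_upwards [eventually_ne_atTop (0 : ℝ)] with ν hν
        field_simp
      exact h2.pow 2
    have := h1.const_mul ((σ p - ε) * c p)
    simpa using this
  -- pick ν₀
  have hev : ∀ᶠ ν : ℝ in atTop, 0 < ∑ p, (σ p - ε) * c p *
      ∏ q ∈ Finset.univ.erase p, ((σ q + ν) / ν) ^ 2 :=
    hg.eventually (eventually_gt_nhds hSpos)
  obtain ⟨ν₀, hν₀pos, hν₀⟩ : ∃ ν₀ : ℝ, 0 < ν₀ ∧ 0 < ∑ p, (σ p - ε) * c p *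
      ∏ q ∈ Finset.univ.erase p, ((σ q + ν₀) / ν₀) ^ 2 := by
    rcases (hev.and (eventually_gt_atTop (0:ℝ))).exists with ⟨ν₀, h1, h2⟩
    exact ⟨ν₀, h2, h1⟩
  have hfν₀ : 0 < f ν₀ := by
    have hrel : ∑ p, (σ p - ε) * c p *
        ∏ q ∈ Finset.univ.erase p, ((σ q + ν₀) / ν₀) ^ 2
        = f ν₀ / (ν₀ ^ 2) ^ (P - 1) := by
      simp only [hf]
      rw [Finset.sum_div]
      refine Finset.sum_congr rfl fun p _ => ?_
      rw [mul_div_assoc]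
      congr 1
      simp only [div_pow]
      rw [Finset.prod_div_distrib]
      congr 1
      rw [Finset.prod_const, Finset.card_erase_of_mem (Finset.mem_univ p),
        Finset.card_univ, Fintype.card_fin]
    rw [hrel] at hν₀
    have h2 : 0 < (ν₀ ^ 2) ^ (P - 1) := by positivity
    have h3 := mul_pos hν₀ h2
    rwa [div_mul_cancel₀ _ h2.ne'] at h3
  -- IVT
  have hfc : Continuous f := by
    apply continuous_finset_sum
    intro p _
    exact continuous_const.mul (continuous_finset_prod _ fun q _ =>
      ((continuous_const.add continuous_id).pow 2))
  obtain ⟨ν, hνmem, hνroot⟩ : ∃ ν ∈ Set.Icc (0:ℝ) ν₀, f ν = 0 := by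
    have := intermediate_value_Icc hν₀pos.le hfc.continuousOn
    have h0 : (0:ℝ) ∈ Set.Icc (f 0) (f ν₀) := ⟨hf0.le, hfν₀.le⟩
    rcases this h0 with ⟨ν, hν, hfν⟩
    exact ⟨ν, hν, hfν⟩
  refine ⟨ν, ?_, hνroot⟩
  rcases hνmem with ⟨h1, h2⟩
  rcases h1.lt_or_eq with h | h
  · exact h
  · exfalso; rw [← h] at hνroot; rw [hνroot] at hf0; exact lt_irrefl 0 hf0
end

section
/- Let S : [0,T_c] → ℂ^(M×N), x_1,…,x_L : [0,T] → ℂ bounded signals with total power P_tx = (1/T) Σ_ℓ ‖x_ℓ‖₂² and PAPRs ρ_ℓ = T ‖x_ℓ‖_∞²/‖x_ℓ‖₂², codebooks C ∈ ℂ^(M×K') and W ∈ ℂ^(N×L'), a beam mapping j : [L] → [L'], and m_S(C,W) = max_{k,ℓ} ∫₀^{T_c} |c_kᴴ S(t) w_ℓ| dt. Then for every k ∈ [K'], sup_t |Σ_{ℓ=1}^L ((c_kᴴ S w_{j(ℓ)}) ∗ x_ℓ)(t)|² ≤ m_S(C,W)² · P_tx · Σ_{ℓ=1}^L ρ_ℓ.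 -/
open Matrix MeasureTheory

/-- Key step of the quantization-noise bound (Lemma 1): the squared peak of the
beamformed self-interference signal is bounded by m_S(C,W)² · P_tx · Σ_ℓ ρ_ℓ. -/
theorem si_peak_power_bound (M N L K' L' : ℕ)
    (T Tc : ℝ) (hT : 0 < T) (hTc : 0 ≤ Tc)
    (S : ℝ → Matrix (Fin M) (Fin N) ℂ)
    (hScont : Continuous S)
    (hSsupp : ∀ t, t ∉ Set.Icc 0 Tc → S t = 0)
    (x : Fin L → ℝ → ℂ)
    (Xpk : Fin L → ℝ)
    (hXpk : ∀ ℓ t, ‖x ℓ t‖ ≤ Xpk ℓ)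
    (hx2pos : ∀ ℓ, 0 < ∫ t in (0:ℝ)..T, ‖x ℓ t‖ ^ 2)
    (ρ : Fin L → ℝ)
    (hρ : ∀ ℓ, ρ ℓ = T * (Xpk ℓ) ^ 2 / ∫ t in (0:ℝ)..T, ‖x ℓ t‖ ^ 2)
    (Ptx : ℝ)
    (hPtx : Ptx = (1 / T) * ∑ ℓ, ∫ t in (0:ℝ)..T, ‖x ℓ t‖ ^ 2)
    (C : Matrix (Fin M) (Fin K') ℂ) (W : Matrix (Fin N) (Fin L') ℂ)
    (j : Fin L → Fin L')
    (mS : ℝ)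
    (hmS : ∀ (k : Fin K') (ℓ : Fin L'),
      (∫ t in (0:ℝ)..Tc,
        ‖star (fun i => C i k) ⬝ᵥ (S t).mulVec (fun i => W i ℓ)‖) ≤ mS) :
    ∀ (k : Fin K') (t : ℝ),
      ‖∑ ℓ, ∫ τ : ℝ,
          (star (fun i => C i k) ⬝ᵥ (S τ).mulVec (fun i => W i (j ℓ))) * x ℓ (t - τ)‖ ^ 2 ≤
        mS ^ 2 * Ptx * ∑ ℓ, ρ ℓ := by
  intro k t
  rcases Nat.eq_zero_or_pos L with hL | hL
  · subst hL
    simp [hPtx]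
  -- L > 0, so there is some ℓ₀ : Fin L
  obtain ⟨ℓ₀⟩ : Nonempty (Fin L) := ⟨⟨0, hL⟩⟩
  set E : Fin L → ℝ := fun ℓ => ∫ s in (0:ℝ)..T, ‖x ℓ s‖ ^ 2 with hE
  have hXpk0 : ∀ ℓ, 0 ≤ Xpk ℓ := fun ℓ => le_trans (norm_nonneg _) (hXpk ℓ 0)
  -- the scalar impulse response
  have key : ∀ ℓ : Fin L,
      ‖∫ τ : ℝ, (star (fun i => C i k) ⬝ᵥ (S τ).mulVec (fun i => W i (j ℓ))) * x ℓ (t - τ)‖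
        ≤ mS * Xpk ℓ := by
    intro ℓ
    set f : ℝ → ℂ := fun τ => star (fun i => C i k) ⬝ᵥ (S τ).mulVec (fun i => W i (j ℓ))
      with hf
    have hfcont : Continuous f := by
      unfold f
      simp only [dotProduct, Matrix.mulVec]
      fun_prop
    have hfzero : ∀ τ, τ ∉ Set.Icc 0 Tc → f τ = 0 := by
      intro τ hτ
      simp [hf, hSsupp τ hτ]
    have hfsupp : HasCompactSupport f :=
      HasCompactSupport.intro isCompact_Icc hfzero
    have hint : Integrable (fun τ => ‖f τ‖ * Xpk ℓ) := by
      exact ((hfcont.norm.integrable_of_hasCompactSupport hfsupp.norm).mul_const _)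
    have h1 : ‖∫ τ : ℝ, f τ * x ℓ (t - τ)‖ ≤ ∫ τ : ℝ, ‖f τ * x ℓ (t - τ)‖ :=
      norm_integral_le_integral_norm _
    have h2 : (∫ τ : ℝ, ‖f τ * x ℓ (t - τ)‖) ≤ ∫ τ : ℝ, ‖f τ‖ * Xpk ℓ := by
      refine integral_mono_of_nonneg (Filter.Eventually.of_forall fun τ => norm_nonneg _)
        hint (Filter.Eventually.of_forall fun τ => ?_)
      simp only []
      rw [norm_mul]
      exact mul_le_mul_of_nonneg_left (hXpk ℓ _) (norm_nonneg _)
    have h3 : (∫ τ : ℝ, ‖f τ‖ * Xpk ℓ) = (∫ τ : ℝ, ‖f τ‖) * Xpk ℓ :=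
      integral_mul_const _ _
    have h4 : (∫ τ : ℝ, ‖f τ‖) ≤ mS := by
      have heq : (∫ τ : ℝ, ‖f τ‖) = ∫ τ in (0:ℝ)..Tc, ‖f τ‖ := by
        rw [intervalIntegral.integral_of_le hTc, ← integral_Icc_eq_integral_Ioc,
          setIntegral_eq_integral_of_forall_compl_eq_zero
            (fun τ hτ => by rw [hfzero τ hτ, norm_zero])]
      rw [heq]
      have := hmS k (j ℓ)
      simpa [hf] using this
    calc ‖∫ τ : ℝ, f τ * x ℓ (t - τ)‖ ≤ (∫ τ : ℝ, ‖f τ‖) * Xpk ℓ := by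
          rw [← h3]; exact h1.trans h2
      _ ≤ mS * Xpk ℓ := mul_le_mul_of_nonneg_right h4 (hXpk0 ℓ)
  have hmS0 : 0 ≤ mS := by
    refine le_trans ?_ (hmS k (j ℓ₀))
    exact intervalIntegral.integral_nonneg hTc (fun τ _ => norm_nonneg _)
  -- peak bound
  have hpeak : ‖∑ ℓ, ∫ τ : ℝ,
      (star (fun i => C i k) ⬝ᵥ (S τ).mulVec (fun i => W i (j ℓ))) * x ℓ (t - τ)‖
      ≤ mS * ∑ ℓ, Xpk ℓ := by
    calc _ ≤ ∑ ℓ, ‖∫ τ : ℝ,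
          (star (fun i => C i k) ⬝ᵥ (S τ).mulVec (fun i => W i (j ℓ))) * x ℓ (t - τ)‖ :=
          norm_sum_le _ _
      _ ≤ ∑ ℓ, mS * Xpk ℓ := Finset.sum_le_sum fun ℓ _ => key ℓ
      _ = mS * ∑ ℓ, Xpk ℓ := (Finset.mul_sum _ _ _).symm
  -- Cauchy–Schwarz (Sedrakyan) step
  have hEpos : ∀ ℓ : Fin L, (0:ℝ) < E ℓ / T := fun ℓ => div_pos (hx2pos ℓ) hT
  have hsed := Finset.sq_sum_div_le_sum_sq_div Finset.univ Xpk
    (g := fun ℓ => E ℓ / T) (fun ℓ _ => hEpos ℓ)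
  have hsum_pos : (0:ℝ) < ∑ ℓ, E ℓ / T :=
    Finset.sum_pos (fun ℓ _ => hEpos ℓ) (Finset.univ_nonempty_iff.2 ⟨ℓ₀⟩)
  have hCS : (∑ ℓ, Xpk ℓ) ^ 2 ≤ Ptx * ∑ ℓ, ρ ℓ := by
    have h1 : (∑ ℓ, Xpk ℓ) ^ 2 ≤ (∑ ℓ, E ℓ / T) * ∑ ℓ, Xpk ℓ ^ 2 / (E ℓ / T) := by
      rw [← div_le_iff₀' hsum_pos]
      exact hsed
    have h2 : Ptx = ∑ ℓ, E ℓ / T := by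
      rw [hPtx, Finset.mul_sum]
      exact Finset.sum_congr rfl fun ℓ _ => by rw [one_div, inv_mul_eq_div]
    have h3 : ∀ ℓ, ρ ℓ = Xpk ℓ ^ 2 / (E ℓ / T) := by
      intro ℓ
      rw [hρ ℓ, div_div_eq_mul_div, mul_comm (Xpk ℓ ^ 2) T]
    calc (∑ ℓ, Xpk ℓ) ^ 2 ≤ (∑ ℓ, E ℓ / T) * ∑ ℓ, Xpk ℓ ^ 2 / (E ℓ / T) := h1
      _ = Ptx * ∑ ℓ, ρ ℓ := by rw [h2]; congr 1; exact Finset.sum_congr rfl fun ℓ _ => (h3 ℓ).symm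
  calc ‖∑ ℓ, ∫ τ : ℝ,
      (star (fun i => C i k) ⬝ᵥ (S τ).mulVec (fun i => W i (j ℓ))) * x ℓ (t - τ)‖ ^ 2
      ≤ (mS * ∑ ℓ, Xpk ℓ) ^ 2 := by
        apply pow_le_pow_left₀ (norm_nonneg _) hpeak
    _ = mS ^ 2 * (∑ ℓ, Xpk ℓ) ^ 2 := mul_pow _ _ _
    _ ≤ mS ^ 2 * (Ptx * ∑ ℓ, ρ ℓ) := mul_le_mul_of_nonneg_left hCS (sq_nonneg _)
    _ = mS ^ 2 * Ptx * ∑ ℓ, ρ ℓ := (mul_assoc _ _ _).symm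
end
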